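/- arXiv:2205.12797 — 2 statements merged into one kernel-verified Lean document; each statement's English description precedes it below -/
import Mathlib

section
/- Let (Ω, P) be a probability space, U ⊆ ℝ^K open, x₀, x₀' ∈ U, and f : Ω × U → ℝ a family of square-integrable random variables, i.e. f(·, x) ∈ L²(P) for every x ∈ U. Assume that for P-almost every ω the partial derivative ∂f(ω, x)/∂x_k exists for all x in neighborhoods V of x₀ and V' of x₀', and that there exists h ∈ L²(P) with |∂f(ω, x)/∂x_k| ≤ h(ω) for all x ∈ V ∪ V' and P-almost every ω. Then the mixed partial derivative ∂²/∂x_k ∂x'_k of the covariance function k(x, x') = Cov(f(·, x), f(·, x')) at (x₀, x₀') exists and equals Cov(∂f(·, x₀)/∂x_k, ∂f(·, x₀')/∂x_k). (The paper's equation (17): the covariance kernel of the k-th partial-derivative process is k^{∂_k ∂'_k}(x, x') = ∂²k(x, x')/∂x_k ∂x'_k.) -/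
open MeasureTheory ProbabilityTheory
open scoped Matrix
open Metric Filter

/-- A measure `ν` on `ι → ℝ` is a multivariate normal distribution `N(m, S)`:
every linear functional pushes `ν` forward to the corresponding univariate Gaussian. -/
def IsGaussianMeasure {ι : Type*} [Fintype ι] (ν : Measure (ι → ℝ))
    (m : ι → ℝ) (S : Matrix ι ι ℝ) : Prop :=
  ∀ t : ι → ℝ,
    ν.map (fun x => ∑ i, t i * x i) =
      gaussianReal (∑ i, t i * m i) (Real.toNNReal (∑ i, ∑ j, t i * S i j * t j))

/-- `X` is a Gaussian random vector on `ι → ℝ` under `P`, with mean vector `m`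
and covariance matrix `S`. -/
def IsGaussianVec {Ω : Type*} [MeasurableSpace Ω] (P : Measure Ω)
    {ι : Type*} [Fintype ι]
    (X : Ω → ι → ℝ) (m : ι → ℝ) (S : Matrix ι ι ℝ) : Prop :=
  Measurable X ∧ IsGaussianMeasure (P.map X) m S

/-- Covariance of two real random variables. -/
noncomputable def covFn {Ω : Type*} [MeasurableSpace Ω] (P : Measure Ω) (X Y : Ω → ℝ) : ℝ :=
  ∫ ω, (X ω - ∫ ω', X ω' ∂P) * (Y ω - ∫ ω', Y ω' ∂P) ∂P

open MeasureTheory ProbabilityTheory Metric Filter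

lemma hasDerivAt_shift' {K : ℕ} {g : (Fin K → ℝ) → ℝ} {y v : Fin K → ℝ} {t : ℝ}
    (hg : LineDifferentiableAt ℝ g (y + t • v) v) :
    HasDerivAt (fun s : ℝ => g (y + s • v)) (lineDeriv ℝ g (y + t • v) v) t := by
  have H : HasDerivAt (fun s : ℝ => g (y + t • v + s • v)) (lineDeriv ℝ g (y + t • v) v)
      (t - t) := by
    rw [sub_self]; exact hg.hasLineDerivAt
  have Hc := H.comp_sub_const t t
  have heq : (fun s : ℝ => g (y + t • v + (s - t) • v)) = fun s : ℝ => g (y + s • v) := by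
    funext s; congr 1; rw [sub_smul]; abel
  rwa [heq] at Hc

lemma int_mul' {Ω : Type*} [MeasurableSpace Ω] (P : Measure Ω)
    {X Y : Ω → ℝ} (hX : MemLp X 2 P) (hY : MemLp Y 2 P) :
    Integrable (fun ω => X ω * Y ω) P := by
  have hd : MemLp (X • Y) 1 P := by
    haveI : ENNReal.HolderTriple 2 2 1 := ⟨by rw [inv_one, ENNReal.inv_two_add_inv_two]⟩
    exact hY.smul hX
  rw [memLp_one_iff_integrable] at hd
  exact hd

lemma memL2_lineDeriv' {Ω : Type*} [MeasurableSpace Ω] {P : Measure Ω} [IsProbabilityMeasure P]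
    {K : ℕ} {U : Set (Fin K → ℝ)}
    {f : Ω → (Fin K → ℝ) → ℝ} {v : Fin K → ℝ}
    (hL2 : ∀ x ∈ U, MemLp (fun ω => f ω x) 2 P)
    {y : Fin K → ℝ} {W : Set (Fin K → ℝ)} (hW : W ∈ nhds y) (hWU : W ⊆ U)
    (hdiff : ∀ᵐ ω ∂P, ∀ x ∈ W, LineDifferentiableAt ℝ (f ω) x v)
    {h : Ω → ℝ} (hh : MemLp h 2 P)
    (hdom : ∀ᵐ ω ∂P, ∀ x ∈ W, |lineDeriv ℝ (f ω) x v| ≤ h ω) :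
    MemLp (fun ω => lineDeriv ℝ (f ω) y v) 2 P := by
  have hc : Continuous (fun t : ℝ => y + t • v) := by fun_prop
  have hpre : (fun t : ℝ => y + t • v) ⁻¹' W ∈ nhds (0:ℝ) := by
    apply hc.continuousAt.preimage_mem_nhds
    simpa using hW
  obtain ⟨ε, hε, hball⟩ := Metric.mem_nhds_iff.1 hpre
  set tn : ℕ → ℝ := fun n => ε / (2 * (n + 1)) with htn
  have htn_pos : ∀ n, 0 < tn n := fun n => by positivity
  have htn_mem : ∀ n, y + tn n • v ∈ W := by
    intro n
    apply hball
    simp only [mem_ball, dist_zero_right, Real.norm_eq_abs, abs_of_pos (htn_pos n), htn]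
    rw [abs_of_pos (by positivity), div_lt_iff₀ (by positivity)]
    nlinarith [htn_pos n, hε]
  have htn_lim : Tendsto tn atTop (nhds 0) := by
    rw [htn]
    apply Tendsto.div_atTop (tendsto_const_nhds)
    apply Tendsto.const_mul_atTop (by norm_num : (0:ℝ) < 2)
    exact tendsto_atTop_add_const_right atTop (1:ℝ) tendsto_natCast_atTop_atTop
  have hy : y ∈ W := mem_of_mem_nhds hW
  have hmeas : AEStronglyMeasurable (fun ω => lineDeriv ℝ (f ω) y v) P := by
    apply aestronglyMeasurable_of_tendsto_ae atTop
      (f := fun n ω => (tn n)⁻¹ * (f ω (y + tn n • v) - f ω y))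
    · intro n
      exact (((hL2 _ (hWU (htn_mem n))).sub (hL2 y (hWU hy))).aestronglyMeasurable).const_mul _
    · filter_upwards [hdiff] with ω hω
      have hd : HasDerivAt (fun t : ℝ => f ω (y + t • v)) (lineDeriv ℝ (f ω) y v) 0 :=
        (hω y hy).hasLineDerivAt
      have hslope := hasDerivAt_iff_tendsto_slope.1 hd
      have hseq : Tendsto tn atTop (nhdsWithin 0 {(0:ℝ)}ᶜ) := by
        apply tendsto_nhdsWithin_of_tendsto_nhds_of_eventually_within _ htn_lim
        filter_upwards with n
        exact (htn_pos n).ne'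
      have hcomp := hslope.comp hseq
      convert hcomp using 2 with n
      simp [slope, Function.comp, zero_smul]
  apply hh.of_le hmeas
  filter_upwards [hdom] with ω hω
  have := hω y hy
  simp only [Real.norm_eq_abs]
  exact this.trans (le_abs_self _)

/-- Derivative of `t ↦ ∫ g ω * f ω (y + t v)` at 0 under domination. -/
lemma main_step {Ω : Type*} [MeasurableSpace Ω] {P : Measure Ω} [IsProbabilityMeasure P]
    {K : ℕ} {U : Set (Fin K → ℝ)}
    {f : Ω → (Fin K → ℝ) → ℝ} {v : Fin K → ℝ}
    (hL2 : ∀ x ∈ U, MemLp (fun ω => f ω x) 2 P)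
    {y : Fin K → ℝ} {W : Set (Fin K → ℝ)} (hW : W ∈ nhds y) (hWU : W ⊆ U)
    (hdiff : ∀ᵐ ω ∂P, ∀ x ∈ W, LineDifferentiableAt ℝ (f ω) x v)
    {h : Ω → ℝ} (hh : MemLp h 2 P)
    (hdom : ∀ᵐ ω ∂P, ∀ x ∈ W, |lineDeriv ℝ (f ω) x v| ≤ h ω)
    {g : Ω → ℝ} (hg : MemLp g 2 P)
    (hD : AEStronglyMeasurable (fun ω => lineDeriv ℝ (f ω) y v) P) :
    HasDerivAt (fun t : ℝ => ∫ ω, g ω * f ω (y + t • v) ∂P)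
      (∫ ω, g ω * lineDeriv ℝ (f ω) y v ∂P) 0 := by
  have hc : Continuous (fun t : ℝ => y + t • v) := by fun_prop
  have hpre : (fun t : ℝ => y + t • v) ⁻¹' W ∈ nhds (0:ℝ) := by
    apply hc.continuousAt.preimage_mem_nhds
    simpa using hW
  obtain ⟨ε, hε, hball⟩ := Metric.mem_nhds_iff.1 hpre
  have hy : y ∈ W := mem_of_mem_nhds hW
  have key := hasDerivAt_integral_of_dominated_loc_of_deriv_le (μ := P)
    (F := fun t ω => g ω * f ω (y + t • v))
    (F' := fun t ω => g ω * lineDeriv ℝ (f ω) (y + t • v) v)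
    (x₀ := (0:ℝ)) (bound := fun ω => |g ω| * h ω) (Metric.ball_mem_nhds 0 hε)
    ?_ ?_ ?_ ?_ ?_ ?_
  · obtain ⟨-, hd⟩ := key
    simp only [zero_smul, add_zero] at hd
    exact hd
  · -- ∀ᶠ t in 𝓝 0, AEStronglyMeasurable
    filter_upwards [hpre] with t ht
    exact hg.aestronglyMeasurable.mul (hL2 _ (hWU ht)).aestronglyMeasurable
  · -- Integrable (F 0)
    have := int_mul' P hg (hL2 y (hWU hy))
    simpa [zero_smul] using this
  · -- AEStronglyMeasurable (F' 0)
    apply AEStronglyMeasurable.mul hg.aestronglyMeasurable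
    simpa [zero_smul] using hD
  · -- bound
    filter_upwards [hdom] with ω hω t ht
    have hmem : y + t • v ∈ W := hball ht
    rw [Real.norm_eq_abs, abs_mul]
    exact mul_le_mul_of_nonneg_left (hω _ hmem) (abs_nonneg _)
  · -- bound integrable
    have h2 : MemLp (fun ω => |g ω|) 2 P := by
      simpa [Real.norm_eq_abs] using hg.norm
    exact int_mul' P h2 hh
  · -- differentiability
    filter_upwards [hdiff] with ω hω t ht
    have hmem : y + t • v ∈ W := hball ht
    exact (hasDerivAt_shift' (hω _ hmem)).const_mul (g ω)

lemma covFn_eq' {Ω : Type*} [MeasurableSpace Ω] (P : Measure Ω) [IsProbabilityMeasure P]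
    {X Y : Ω → ℝ} (hX : MemLp X 2 P) (hY : MemLp Y 2 P) :
    covFn P X Y = (∫ ω, X ω * Y ω ∂P) - (∫ ω, X ω ∂P) * (∫ ω, Y ω ∂P) := by
  have hXi : Integrable X P := hX.integrable one_le_two
  have hYi : Integrable Y P := hY.integrable one_le_two
  have hXY : Integrable (fun ω => X ω * Y ω) P := int_mul' P hX hY
  set a := ∫ ω, X ω ∂P with ha
  set b := ∫ ω, Y ω ∂P with hb
  have key : ∀ ω, (X ω - a) * (Y ω - b) = X ω * Y ω - b * X ω - a * Y ω + a * b := by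
    intro ω; ring
  unfold covFn
  rw [← ha, ← hb]
  simp_rw [key]
  have h1 : Integrable (fun ω => X ω * Y ω - b * X ω) P := by
    exact hXY.sub (hXi.const_mul b)
  have h2 : Integrable (fun ω => X ω * Y ω - b * X ω - a * Y ω) P := by
    exact h1.sub (hYi.const_mul a)
  rw [integral_add h2 (integrable_const (a * b)), integral_sub h1 (hYi.const_mul a),
    integral_sub hXY (hXi.const_mul b), MeasureTheory.integral_const_mul,
    MeasureTheory.integral_const_mul, integral_const]
  simp [← ha, ← hb]
  ring

lemma covFn_comm {Ω : Type*} [MeasurableSpace Ω] (P : Measure Ω) (X Y : Ω → ℝ) :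
    covFn P X Y = covFn P Y X := by
  unfold covFn; congr 1; funext ω; ring

/-- Derivative of `t ↦ Cov(g, f(y + t v))` at 0. -/
lemma cov_step {Ω : Type*} [MeasurableSpace Ω] {P : Measure Ω} [IsProbabilityMeasure P]
    {K : ℕ} {U : Set (Fin K → ℝ)} (hU : IsOpen U)
    {f : Ω → (Fin K → ℝ) → ℝ} {v : Fin K → ℝ}
    (hL2 : ∀ x ∈ U, MemLp (fun ω => f ω x) 2 P)
    {y : Fin K → ℝ} {W : Set (Fin K → ℝ)} (hW : W ∈ nhds y) (hWU : W ⊆ U)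
    (hdiff : ∀ᵐ ω ∂P, ∀ x ∈ W, LineDifferentiableAt ℝ (f ω) x v)
    {h : Ω → ℝ} (hh : MemLp h 2 P)
    (hdom : ∀ᵐ ω ∂P, ∀ x ∈ W, |lineDeriv ℝ (f ω) x v| ≤ h ω)
    {g : Ω → ℝ} (hg : MemLp g 2 P) :
    HasDerivAt (fun t : ℝ => covFn P g (fun ω => f ω (y + t • v)))
      (covFn P g (fun ω => lineDeriv ℝ (f ω) y v)) 0 := by
  have hD2 : MemLp (fun ω => lineDeriv ℝ (f ω) y v) 2 P :=
    memL2_lineDeriv' hL2 hW hWU hdiff hh hdom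
  have hA := main_step hL2 hW hWU hdiff hh hdom hg hD2.aestronglyMeasurable
  have hB := main_step hL2 hW hWU hdiff hh hdom (memLp_const (1:ℝ))
    hD2.aestronglyMeasurable
  simp only [one_mul] at hB
  have hAB := hA.sub (hB.const_mul (∫ ω, g ω ∂P))
  have hval : covFn P g (fun ω => lineDeriv ℝ (f ω) y v)
      = (∫ ω, g ω * lineDeriv ℝ (f ω) y v ∂P)
        - (∫ ω, g ω ∂P) * (∫ ω, lineDeriv ℝ (f ω) y v ∂P) :=
    covFn_eq' P hg hD2
  rw [hval]
  apply hAB.congr_of_eventuallyEq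
  have hc : Continuous (fun t : ℝ => y + t • v) := by fun_prop
  have hpre : (fun t : ℝ => y + t • v) ⁻¹' U ∈ nhds (0:ℝ) := by
    apply hc.continuousAt.preimage_mem_nhds
    apply hU.mem_nhds
    simpa using hWU (mem_of_mem_nhds hW)
  filter_upwards [hpre] with t ht
  exact covFn_eq' P hg (hL2 _ ht)


/-- **Kernel of the derivative process (equation (17)).**
Under the stated domination assumptions on the `k`-th partial derivative of the family
`f` near `x₀` and near `x₀'`, the mixed partial derivative
`∂²/∂x_k ∂x'_k` of `k(x,x') = Cov(f(·,x), f(·,x'))` at `(x₀, x₀')` exists and equals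
`Cov(∂_k f(·,x₀), ∂_k f(·,x₀'))`. -/
theorem cov_mixed_partial_deriv
    {Ω : Type*} [MeasurableSpace Ω] (P : Measure Ω) [IsProbabilityMeasure P]
    {K : ℕ} (U : Set (Fin K → ℝ)) (hU : IsOpen U)
    (x₀ x₀' : Fin K → ℝ) (hx₀ : x₀ ∈ U) (hx₀' : x₀' ∈ U)
    (f : Ω → (Fin K → ℝ) → ℝ)
    (hL2 : ∀ x ∈ U, MemLp (fun ω => f ω x) 2 P)
    (k : Fin K)
    (V V' : Set (Fin K → ℝ))
    (hV : V ∈ nhds x₀) (hV' : V' ∈ nhds x₀') (hVU : V ⊆ U) (hV'U : V' ⊆ U)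
    (hdiff : ∀ᵐ ω ∂P, ∀ x ∈ V ∪ V', LineDifferentiableAt ℝ (f ω) x (Pi.single k 1))
    (h : Ω → ℝ) (hh : MemLp h 2 P)
    (hdom : ∀ᵐ ω ∂P, ∀ x ∈ V ∪ V', |lineDeriv ℝ (f ω) x (Pi.single k 1)| ≤ h ω) :
    (∀ x ∈ U, LineDifferentiableAt ℝ
        (fun x' => covFn P (fun ω => f ω x) (fun ω => f ω x')) x₀' (Pi.single k 1)) ∧
    HasLineDerivAt ℝ
      (fun x => lineDeriv ℝ
        (fun x' => covFn P (fun ω => f ω x) (fun ω => f ω x')) x₀' (Pi.single k 1))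
      (covFn P (fun ω => lineDeriv ℝ (f ω) x₀ (Pi.single k 1))
        (fun ω => lineDeriv ℝ (f ω) x₀' (Pi.single k 1)))
      x₀ (Pi.single k 1) := by
  set v := (Pi.single k 1 : Fin K → ℝ) with hv
  have hdiffV' : ∀ᵐ ω ∂P, ∀ x ∈ V', LineDifferentiableAt ℝ (f ω) x v := by
    filter_upwards [hdiff] with ω hω x hx
    exact hω x (Set.mem_union_right _ hx)
  have hdomV' : ∀ᵐ ω ∂P, ∀ x ∈ V', |lineDeriv ℝ (f ω) x v| ≤ h ω := by
    filter_upwards [hdom] with ω hω x hx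
    exact hω x (Set.mem_union_right _ hx)
  have hdiffV : ∀ᵐ ω ∂P, ∀ x ∈ V, LineDifferentiableAt ℝ (f ω) x v := by
    filter_upwards [hdiff] with ω hω x hx
    exact hω x (Set.mem_union_left _ hx)
  have hdomV : ∀ᵐ ω ∂P, ∀ x ∈ V, |lineDeriv ℝ (f ω) x v| ≤ h ω := by
    filter_upwards [hdom] with ω hω x hx
    exact hω x (Set.mem_union_left _ hx)
  have hD2 : MemLp (fun ω => lineDeriv ℝ (f ω) x₀' v) 2 P :=
    memL2_lineDeriv' hL2 hV' hV'U hdiffV' hh hdomV'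
  have hstep : ∀ x ∈ U, HasDerivAt
      (fun t : ℝ => covFn P (fun ω => f ω x) (fun ω => f ω (x₀' + t • v)))
      (covFn P (fun ω => f ω x) (fun ω => lineDeriv ℝ (f ω) x₀' v)) 0 :=
    fun x hx => cov_step hU hL2 hV' hV'U hdiffV' hh hdomV' (hL2 x hx)
  constructor
  · intro x hx
    exact (hstep x hx).differentiableAt
  · have hlim : ∀ x ∈ U,
        lineDeriv ℝ (fun x' => covFn P (fun ω => f ω x) fun ω => f ω x') x₀' v
          = covFn P (fun ω => f ω x) (fun ω => lineDeriv ℝ (f ω) x₀' v) := by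
      intro x hx
      exact HasLineDerivAt.lineDeriv (hstep x hx)
    have hmain : HasDerivAt
        (fun t : ℝ => covFn P (fun ω => lineDeriv ℝ (f ω) x₀' v)
          (fun ω => f ω (x₀ + t • v)))
        (covFn P (fun ω => lineDeriv ℝ (f ω) x₀' v)
          (fun ω => lineDeriv ℝ (f ω) x₀ v)) 0 :=
      cov_step hU hL2 hV hVU hdiffV hh hdomV hD2
    rw [covFn_comm P (fun ω => lineDeriv ℝ (f ω) x₀ v) (fun ω => lineDeriv ℝ (f ω) x₀' v)]
    have hpre : (fun t : ℝ => x₀ + t • v) ⁻¹' U ∈ nhds (0:ℝ) := by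
      apply (Continuous.continuousAt (by fun_prop)).preimage_mem_nhds
      simpa using hU.mem_nhds hx₀
    have hEq : (fun t : ℝ =>
          (fun x => lineDeriv ℝ (fun x' => covFn P (fun ω => f ω x) fun ω => f ω x') x₀' v)
            (x₀ + t • v)) =ᶠ[nhds (0:ℝ)]
        (fun t : ℝ => covFn P (fun ω => lineDeriv ℝ (f ω) x₀' v)
          (fun ω => f ω (x₀ + t • v))) := by
      filter_upwards [hpre] with t ht
      rw [hlim _ ht, covFn_comm]
    exact hmain.congr_of_eventuallyEq hEq
end

section
/- Let σ : ℝ → ℝ be the sigmoid function σ(x) = 1/(1 + exp(−x)). Then for every n ≥ 1 and every x ∈ ℝ, the n-th derivative of σ satisfies σ^{(n)}(x) = Σ_{k=1}^{n+1} (−1)^{k+1} (k−1)! · Stir(n+1, k) · σ(x)^k, where Stir(·, ·) denotes the Stirling number of the second kind and σ(x)^k is the k-th power of σ(x). -/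
/-- Stirling numbers of the second kind: `stirling2 n k` counts the partitions of an
`n`-element set into `k` nonempty blocks, via the recurrence
`S(n+1, k+1) = (k+1)·S(n, k+1) + S(n, k)`. -/
def stirling2 : ℕ → ℕ → ℕ
  | 0, 0 => 1
  | 0, _ + 1 => 0
  | _ + 1, 0 => 0
  | n + 1, k + 1 => (k + 1) * stirling2 n (k + 1) + stirling2 n k

/-- The sigmoid function `σ(x) = 1 / (1 + exp(−x))`. -/
noncomputable def sigmoid (x : ℝ) : ℝ := 1 / (1 + Real.exp (-x))

lemma stirling2_eq_zero : ∀ {n k : ℕ}, n < k → stirling2 n k = 0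
  | 0, 0, h => by omega
  | 0, k + 1, _ => rfl
  | n + 1, 0, h => by omega
  | n + 1, k + 1, h => by
    have h1 : stirling2 n (k + 1) = 0 := stirling2_eq_zero (by omega)
    have h2 : stirling2 n k = 0 := stirling2_eq_zero (by omega)
    simp [stirling2, h1, h2]

lemma hasDerivAt_sigmoid (x : ℝ) :
    HasDerivAt sigmoid (sigmoid x - sigmoid x ^ 2) x := by
  have h0 : (0:ℝ) < 1 + Real.exp (-x) := by positivity
  have h1 : HasDerivAt (fun x : ℝ => 1 + Real.exp (-x)) (-Real.exp (-x)) x := by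
    simpa using ((Real.hasDerivAt_exp (-x)).comp x (hasDerivAt_neg x)).const_add 1
  have h2 := h1.inv h0.ne'
  have he : sigmoid = fun x : ℝ => (1 + Real.exp (-x))⁻¹ := by
    ext y; simp [sigmoid, one_div]
  rw [he]
  refine h2.congr_deriv ?_
  beta_reduce
  field_simp
  ring

lemma hasDerivAt_sigmoid_pow (k : ℕ) (x : ℝ) :
    HasDerivAt (fun y => sigmoid y ^ k)
      ((k : ℝ) * (sigmoid x ^ k - sigmoid x ^ (k + 1))) x := by
  have h := (hasDerivAt_sigmoid x).fun_pow k
  refine h.congr_deriv ?_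
  cases k with
  | zero => simp
  | succ m =>
    simp only [Nat.add_sub_cancel]
    push_cast
    ring

lemma icc_map (n : ℕ) :
    Finset.Icc 1 (n+1) = Finset.map ⟨(· + 1), add_left_injective 1⟩ (Finset.range (n+1)) := by
  ext a
  simp only [Finset.mem_Icc, Finset.mem_map, Finset.mem_range, Function.Embedding.coeFn_mk]
  constructor
  · rintro ⟨h1, h2⟩; exact ⟨a - 1, by omega, by omega⟩
  · rintro ⟨b, hb, rfl⟩; omega

lemma sigmoid_iteratedDeriv_aux (n : ℕ) (x : ℝ) :
    iteratedDeriv n sigmoid x =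
      ∑ k ∈ Finset.Icc 1 (n + 1),
        (-1 : ℝ) ^ (k + 1) * (Nat.factorial (k - 1) : ℝ) * (stirling2 (n + 1) k : ℝ) *
          sigmoid x ^ k := by
  induction n generalizing x with
  | zero =>
    rw [iteratedDeriv_zero]
    norm_num [stirling2]
  | succ n ih =>
    rw [iteratedDeriv_succ]
    have hfun : iteratedDeriv n sigmoid = fun y =>
        ∑ k ∈ Finset.Icc 1 (n + 1),
          (-1 : ℝ) ^ (k + 1) * (Nat.factorial (k - 1) : ℝ) * (stirling2 (n + 1) k : ℝ) *
            sigmoid y ^ k := funext ih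
    rw [hfun]
    have hd : HasDerivAt (fun y =>
        ∑ k ∈ Finset.Icc 1 (n + 1),
          (-1 : ℝ) ^ (k + 1) * (Nat.factorial (k - 1) : ℝ) * (stirling2 (n + 1) k : ℝ) *
            sigmoid y ^ k)
        (∑ k ∈ Finset.Icc 1 (n + 1),
          (-1 : ℝ) ^ (k + 1) * (Nat.factorial (k - 1) : ℝ) * (stirling2 (n + 1) k : ℝ) *
            ((k : ℝ) * (sigmoid x ^ k - sigmoid x ^ (k + 1)))) x :=
      HasDerivAt.fun_sum fun k _ =>
        ((hasDerivAt_sigmoid_pow k x).const_mul _)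
    rw [hd.deriv]
    -- convert both sums to range sums
    rw [icc_map n, icc_map (n+1), Finset.sum_map, Finset.sum_map]
    simp only [Function.Embedding.coeFn_mk, Nat.add_sub_cancel]
    -- LHS = ∑_{i<n+1} A i - B i; RHS = ∑_{i<n+2} C i
    -- peel zero from RHS, extend LHS's A part with zero top term
    have hz : (stirling2 (n + 1) (n + 2) : ℝ) = 0 := by
      rw [stirling2_eq_zero (by omega)]; norm_num
    rw [Finset.sum_range_succ' (fun i =>
      (-1 : ℝ) ^ (i + 1 + 1) * (Nat.factorial i : ℝ) * (stirling2 (n + 2) (i + 1) : ℝ) *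
        sigmoid x ^ (i + 1)) (n + 1)]
    have hsplit : ∀ i ∈ Finset.range (n + 1),
        (-1 : ℝ) ^ (i + 1 + 1) * (Nat.factorial i : ℝ) * (stirling2 (n + 1) (i + 1) : ℝ) *
          ((i + 1 : ℕ) * (sigmoid x ^ (i + 1) - sigmoid x ^ (i + 1 + 1))) =
        ((-1 : ℝ) ^ (i + 1 + 1) * (Nat.factorial i : ℝ) * (stirling2 (n + 1) (i + 1) : ℝ) *
          ((i + 1 : ℕ) * sigmoid x ^ (i + 1))) -
        ((-1 : ℝ) ^ (i + 1 + 1) * (Nat.factorial i : ℝ) * (stirling2 (n + 1) (i + 1) : ℝ) *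
          ((i + 1 : ℕ) * sigmoid x ^ (i + 2))) := by
      intro i _; ring
    rw [Finset.sum_congr rfl hsplit, Finset.sum_sub_distrib]
    -- extend the first sum with a zero top term, then peel its bottom term
    have htop : (∑ i ∈ Finset.range (n + 1),
        (-1 : ℝ) ^ (i + 1 + 1) * (Nat.factorial i : ℝ) * (stirling2 (n + 1) (i + 1) : ℝ) *
          ((i + 1 : ℕ) * sigmoid x ^ (i + 1))) =
        ∑ i ∈ Finset.range (n + 2),
        (-1 : ℝ) ^ (i + 1 + 1) * (Nat.factorial i : ℝ) * (stirling2 (n + 1) (i + 1) : ℝ) *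
          ((i + 1 : ℕ) * sigmoid x ^ (i + 1)) := by
      rw [Finset.sum_range_succ (fun i =>
        (-1 : ℝ) ^ (i + 1 + 1) * (Nat.factorial i : ℝ) * (stirling2 (n + 1) (i + 1) : ℝ) *
          ((i + 1 : ℕ) * sigmoid x ^ (i + 1))) (n + 1), hz]
      ring
    rw [htop, Finset.sum_range_succ' (fun i =>
      (-1 : ℝ) ^ (i + 1 + 1) * (Nat.factorial i : ℝ) * (stirling2 (n + 1) (i + 1) : ℝ) *
        ((i + 1 : ℕ) * sigmoid x ^ (i + 1))) (n + 1)]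
    rw [sub_eq_iff_eq_add]
    have hsum : (∑ i ∈ Finset.range (n + 1),
        (-1 : ℝ) ^ (i + 1 + 1 + 1) * (Nat.factorial (i + 1) : ℝ) *
          (stirling2 (n + 1) (i + 1 + 1) : ℝ) * ((i + 1 + 1 : ℕ) * sigmoid x ^ (i + 1 + 1))) =
        (∑ i ∈ Finset.range (n + 1),
          (-1 : ℝ) ^ (i + 1 + 1 + 1) * (Nat.factorial (i + 1) : ℝ) *
            (stirling2 (n + 2) (i + 1 + 1) : ℝ) * sigmoid x ^ (i + 1 + 1)) +
        ∑ i ∈ Finset.range (n + 1),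
          (-1 : ℝ) ^ (i + 1 + 1) * (Nat.factorial i : ℝ) * (stirling2 (n + 1) (i + 1) : ℝ) *
            ((i + 1 : ℕ) * sigmoid x ^ (i + 2)) := by
      rw [← Finset.sum_add_distrib]
      refine Finset.sum_congr rfl fun i _ => ?_
      have hrec : stirling2 (n + 2) (i + 2) =
          (i + 2) * stirling2 (n + 1) (i + 2) + stirling2 (n + 1) (i + 1) := rfl
      have hfac : Nat.factorial (i + 1) = (i + 1) * Nat.factorial i := rfl
      rw [show i + 1 + 1 = i + 2 from rfl, hrec, hfac]
      push_cast
      ring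
    rw [hsum, show stirling2 (n + 2) (0 + 1) = stirling2 (n + 1) (0 + 1) from by
      simp [stirling2]]
    push_cast
    ring

/-- **Higher derivatives of the sigmoid function via Stirling numbers.**
For every `n ≥ 1` and `x ∈ ℝ`,
`σ^{(n)}(x) = ∑_{k=1}^{n+1} (−1)^{k+1} (k−1)! · Stir(n+1, k) · σ(x)^k`. -/
theorem sigmoid_iteratedDeriv (n : ℕ) (hn : 1 ≤ n) (x : ℝ) :
    iteratedDeriv n sigmoid x =
      ∑ k ∈ Finset.Icc 1 (n + 1),
        (-1 : ℝ) ^ (k + 1) * (Nat.factorial (k - 1) : ℝ) * (stirling2 (n + 1) k : ℝ) *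
          sigmoid x ^ k := by
  exact sigmoid_iteratedDeriv_aux n x
end
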